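/- If $\mathcal{F} \subseteq 2^{[n]}$ contains no chain of $k+1$ sets $F_1 \subsetneq F_2 \subsetneq \cdots \subsetneq F_{k+1}$ (i.e., $\mathcal{F}$ is $k$-Sperner), then $\sum_{F \in \mathcal{F}} 1/\binom{n}{|F|} \leq k$. -/
import Mathlib

open Finset

lemma lym_lubell (n : ℕ) (𝒜 : Finset (Finset (Fin n)))
    (h : IsAntichain (· ⊆ ·) (𝒜 : Set (Finset (Fin n)))) :
    ∑ A ∈ 𝒜, (1 : ℚ) / (n.choose A.card) ≤ 1 := by
  have key := Finset.sum_card_slice_div_choose_le_one (𝕜 := ℚ) h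
  rw [Fintype.card_fin] at key
  refine le_trans (le_of_eq ?_) key
  have hmaps : ∀ A ∈ 𝒜, A.card ∈ Finset.range (n + 1) := fun A _ => by
    simpa [Nat.lt_succ_iff] using (Finset.card_le_univ A).trans_eq (by simp)
  rw [← Finset.sum_fiberwise_of_maps_to hmaps (fun A => (1 : ℚ) / (n.choose A.card))]
  refine Finset.sum_congr rfl fun r hr => ?_
  rw [Finset.slice]
  rw [Finset.sum_congr rfl (fun A hA => by rw [(Finset.mem_filter.1 hA).2])]
  simp [Finset.sum_const, mul_one_div, div_eq_mul_inv]

theorem k_sperner_lubell (n k : ℕ) (𝒜 : Finset (Finset (Fin n)))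
    (h : ¬ ∃ f : Fin (k + 1) → Finset (Fin n),
      StrictMono f ∧ ∀ i, f i ∈ 𝒜) :
    ∑ A ∈ 𝒜, (1 : ℚ) / (n.choose A.card) ≤ k := by
  induction k generalizing 𝒜 with
  | zero =>
    have : 𝒜 = ∅ := by
      by_contra hne
      obtain ⟨A, hA⟩ := Finset.nonempty_iff_ne_empty.2 hne
      exact h ⟨fun _ => A, @Subsingleton.strictMono _ _ _ _ Fin.subsingleton_one _, fun _ => hA⟩
    simp [this]
  | succ k ih =>
    set M := 𝒜.filter (fun A => ∀ B ∈ 𝒜, ¬ A ⊂ B) with hM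
    have hMac : IsAntichain (· ⊆ ·) (M : Set (Finset (Fin n))) := by
      intro A hA B hB hne hsub
      simp only [hM, Finset.coe_filter, Set.mem_setOf_eq] at hA hB
      exact hA.2 B hB.1 (lt_of_le_of_ne hsub hne)
    have hrest : ∑ A ∈ 𝒜.filter (fun A => ¬ ∀ B ∈ 𝒜, ¬ A ⊂ B),
        (1 : ℚ) / (n.choose A.card) ≤ k := by
      apply ih
      rintro ⟨f, hf, hfmem⟩
      have hlast := hfmem (Fin.last k)
      rw [Finset.mem_filter] at hlast
      push_neg at hlast
      obtain ⟨B, hB, hBsub⟩ := hlast.2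
      refine h ⟨Fin.snoc f B, ?_, ?_⟩
      · intro i j
        refine Fin.lastCases ?_ ?_ j
        · intro hij
          have hi : i ≠ Fin.last (k + 1) := hij.ne
          obtain ⟨i', rfl⟩ := Fin.exists_castSucc_eq.2 hi
          rw [Fin.snoc_castSucc, Fin.snoc_last]
          exact lt_of_le_of_lt (hf.monotone (Fin.le_last i')) hBsub
        · intro j' hij
          have hi : i ≠ Fin.last (k + 1) := (hij.trans (Fin.castSucc_lt_last j')).ne
          obtain ⟨i', rfl⟩ := Fin.exists_castSucc_eq.2 hi
          rw [Fin.snoc_castSucc, Fin.snoc_castSucc]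
          exact hf (by simpa using hij)
      · intro i
        refine Fin.lastCases ?_ ?_ i
        · rw [Fin.snoc_last]; exact hB
        · intro i'
          rw [Fin.snoc_castSucc]
          exact (Finset.mem_filter.1 (hfmem i')).1
    have hsplit := Finset.sum_filter_add_sum_filter_not 𝒜 (fun A => ∀ B ∈ 𝒜, ¬ A ⊂ B)
      (fun A => (1 : ℚ) / (n.choose A.card))
    rw [← hsplit]
    push_cast
    have hMle := lym_lubell n M hMac
    linarith
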